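/- Let α ∈ (−1, 1), set β := √(1 − α²), and let λ > 0 satisfy λ > α and λα < 1. Let X and Y be independent standard normal random variables and define G(η, σ) := ℙ(X ≥ η and αX + βY ≥ σ). Then lim_{η → ∞} (−2β² · log G(η, λη)) / ((1 + λ² − 2λα) · η²) = 1; that is, G(η, σ) = exp(−(1 + o(1)) · (η² + σ² − 2ησα)/(2β²)) as η → ∞ along σ = λη. -/

import Mathlib

open MeasureTheory

open Real in
/-- The standard Gaussian measure `N(0,1)` on `ℝ`. -/
noncomputable def stdGaussian : Measure ℝ :=
  volume.withDensity fun t => ENNReal.ofReal (Real.exp (-t ^ 2 / 2) / Real.sqrt (2 * Real.pi))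

open Real Filter

lemma stdGaussian_eq : stdGaussian = ProbabilityTheory.gaussianReal 0 1 := by
  rw [ProbabilityTheory.gaussianReal_of_var_ne_zero 0 one_ne_zero]
  unfold stdGaussian
  congr 1
  ext t
  rw [ProbabilityTheory.gaussianPDF_def]
  congr 1
  rw [ProbabilityTheory.gaussianPDFReal_def]
  simp
  rw [div_eq_inv_mul]
  ring_nf

instance : IsProbabilityMeasure stdGaussian := by
  rw [stdGaussian_eq]; infer_instance

lemma stdGaussian_density_nonneg (t : ℝ) : 0 ≤ Real.exp (-t ^ 2 / 2) / Real.sqrt (2 * Real.pi) :=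
  div_nonneg (exp_nonneg _) (Real.sqrt_nonneg _)

lemma stdGaussian_eq_withDensity_nnreal :
    stdGaussian = volume.withDensity
      (fun t => ((Real.exp (-t ^ 2 / 2) / Real.sqrt (2 * Real.pi)).toNNReal : ENNReal)) := rfl

lemma meas_dens : Measurable fun t : ℝ => (Real.exp (-t ^ 2 / 2) / Real.sqrt (2 * Real.pi)).toNNReal := by
  fun_prop

lemma real_density_eq (c t : ℝ) :
    Real.exp (-t ^ 2 / 2) / Real.sqrt (2 * Real.pi) * Real.exp (c * t)
      = (Real.sqrt (2 * Real.pi))⁻¹ * Real.exp (c ^ 2 / 2) * Real.exp (-(1/2) * (t - c) ^ 2) := by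
  rw [div_eq_inv_mul, mul_assoc, mul_assoc, ← Real.exp_add, ← Real.exp_add]
  ring_nf

lemma integrable_aux (c : ℝ) :
    Integrable (fun t : ℝ => Real.exp (-t ^ 2 / 2) / Real.sqrt (2 * Real.pi) * Real.exp (c * t)) := by
  simp_rw [real_density_eq c]
  exact ((integrable_exp_neg_mul_sq (by norm_num : (0:ℝ) < 1/2)).comp_sub_right c).const_mul _

lemma integral_aux (c : ℝ) :
    ∫ t : ℝ, Real.exp (-t ^ 2 / 2) / Real.sqrt (2 * Real.pi) * Real.exp (c * t)
      = Real.exp (c ^ 2 / 2) := by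
  simp_rw [real_density_eq c]
  rw [integral_const_mul]
  rw [show (fun t : ℝ => Real.exp (-(1/2) * (t - c) ^ 2)) = fun t => (fun x => Real.exp (-(1/2) * x ^ 2)) (t - c) from rfl]
  rw [integral_sub_right_eq_self (fun x : ℝ => Real.exp (-(1/2) * x ^ 2)) c]
  rw [integral_gaussian]
  rw [show π / (1/2) = 2 * π by ring]
  rw [mul_comm, ← mul_assoc, mul_inv_cancel₀ (by positivity : Real.sqrt (2*π) ≠ 0), one_mul]

lemma integrable_exp_mul_stdGaussian (c : ℝ) :
    Integrable (fun t : ℝ => Real.exp (c * t)) stdGaussian := by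
  rw [stdGaussian_eq_withDensity_nnreal,
    integrable_withDensity_iff_integrable_smul meas_dens]
  have : ∀ t : ℝ, (Real.exp (-t ^ 2 / 2) / Real.sqrt (2 * Real.pi)).toNNReal • Real.exp (c * t)
      = Real.exp (-t ^ 2 / 2) / Real.sqrt (2 * Real.pi) * Real.exp (c * t) := by
    intro t
    rw [NNReal.smul_def, Real.coe_toNNReal _ (stdGaussian_density_nonneg t), smul_eq_mul]
  simp_rw [this]
  exact integrable_aux c

lemma integral_exp_mul_stdGaussian (c : ℝ) :
    ∫ t, Real.exp (c * t) ∂stdGaussian = Real.exp (c ^ 2 / 2) := by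
  rw [stdGaussian_eq_withDensity_nnreal,
    integral_withDensity_eq_integral_smul meas_dens]
  have : ∀ t : ℝ, (Real.exp (-t ^ 2 / 2) / Real.sqrt (2 * Real.pi)).toNNReal • Real.exp (c * t)
      = Real.exp (-t ^ 2 / 2) / Real.sqrt (2 * Real.pi) * Real.exp (c * t) := by
    intro t
    rw [NNReal.smul_def, Real.coe_toNNReal _ (stdGaussian_density_nonneg t), smul_eq_mul]
  simp_rw [this]
  exact integral_aux c

lemma meas_le_integral {X : Type*} [MeasurableSpace X] {μ : Measure X} [IsProbabilityMeasure μ]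
    {S : Set X} (hS : MeasurableSet S) {f : X → ℝ} (hf : Integrable f μ)
    (h0 : ∀ p, 0 ≤ f p) (h1 : ∀ p ∈ S, 1 ≤ f p) :
    (μ S).toReal ≤ ∫ p, f p ∂μ := by
  change μ.real S ≤ _
  rw [← integral_indicator_one hS]
  refine integral_mono ((integrable_const 1).indicator hS) hf fun p => ?_
  by_cases hp : p ∈ S
  · simpa [Set.indicator_of_mem hp] using h1 p hp
  · simpa [Set.indicator_of_notMem hp] using h0 p

lemma measurable_S (α β lam η : ℝ) :
    MeasurableSet {p : ℝ × ℝ | η ≤ p.1 ∧ lam * η ≤ α * p.1 + β * p.2} := by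
  have : {p : ℝ × ℝ | η ≤ p.1 ∧ lam * η ≤ α * p.1 + β * p.2}
      = {p : ℝ × ℝ | η ≤ p.1} ∩ {p : ℝ × ℝ | lam * η ≤ α * p.1 + β * p.2} := rfl
  rw [this]
  exact (measurableSet_le measurable_const measurable_fst).inter
    (measurableSet_le measurable_const (by fun_prop))

lemma upper_bound (α lam : ℝ) (hα₁ : -1 < α) (hα₂ : α < 1)
    (hlam : 0 < lam) (hlamα : α < lam) (hlamα' : lam * α < 1) (η : ℝ) (hη : 0 ≤ η) :
    ((stdGaussian.prod stdGaussian)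
        {p : ℝ × ℝ | η ≤ p.1 ∧ lam * η ≤ α * p.1 + Real.sqrt (1 - α ^ 2) * p.2}).toReal
      ≤ Real.exp (-((1 + lam ^ 2 - 2 * lam * α) * η ^ 2) / (2 * (1 - α ^ 2))) := by
  set β := Real.sqrt (1 - α ^ 2) with hβdef
  have hB : (0:ℝ) < 1 - α ^ 2 := by nlinarith
  have hβ2 : β ^ 2 = 1 - α ^ 2 := Real.sq_sqrt hB.le
  set t := (1 - α * lam) / (1 - α ^ 2) * η with htdef
  set u := (lam - α) / (1 - α ^ 2) * η with hudef
  have ht : 0 ≤ t := by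
    apply mul_nonneg (div_nonneg (by nlinarith) hB.le) hη
  have hu : 0 ≤ u := by
    apply mul_nonneg (div_nonneg (by nlinarith) hB.le) hη
  set f : ℝ × ℝ → ℝ := fun p =>
    Real.exp (-(t + u * lam) * η) *
      (Real.exp ((t + u * α) * p.1) * Real.exp ((u * β) * p.2)) with hfdef
  have hf : Integrable f (stdGaussian.prod stdGaussian) :=
    (((integrable_exp_mul_stdGaussian (t + u * α)).mul_prod
      (integrable_exp_mul_stdGaussian (u * β)))).const_mul _
  have h0 : ∀ p, 0 ≤ f p := fun p => by positivity
  have h1 : ∀ p ∈ {p : ℝ × ℝ | η ≤ p.1 ∧ lam * η ≤ α * p.1 + β * p.2}, 1 ≤ f p := by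
    rintro ⟨x, y⟩ ⟨hx, hxy⟩
    have : f (x, y) = Real.exp (t * (x - η) + u * (α * x + β * y - lam * η)) := by
      rw [hfdef]; dsimp only; rw [← Real.exp_add, ← Real.exp_add]; ring_nf
    rw [this]
    have h1' : 0 ≤ t * (x - η) := mul_nonneg ht (by simp only [Set.mem_setOf_eq] at hx; linarith)
    have h2' : 0 ≤ u * (α * x + β * y - lam * η) := mul_nonneg hu (by linarith)
    exact Real.one_le_exp (by linarith)
  calc ((stdGaussian.prod stdGaussian) _).toReal
      ≤ ∫ p, f p ∂(stdGaussian.prod stdGaussian) :=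
        meas_le_integral (measurable_S α β lam η) hf h0 h1
    _ = Real.exp (-(t + u * lam) * η) *
        (Real.exp ((t + u * α) ^ 2 / 2) * Real.exp ((u * β) ^ 2 / 2)) := by
        rw [hfdef]
        simp only []
        rw [MeasureTheory.integral_const_mul,
          integral_prod_mul (μ := stdGaussian) (ν := stdGaussian)
            (fun x => Real.exp ((t + u * α) * x)) (fun y => Real.exp ((u * β) * y)),
          integral_exp_mul_stdGaussian, integral_exp_mul_stdGaussian]
    _ = Real.exp (-((1 + lam ^ 2 - 2 * lam * α) * η ^ 2) / (2 * (1 - α ^ 2))) := by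
        rw [← Real.exp_add, ← Real.exp_add]
        congr 1
        have : (u * β) ^ 2 = u ^ 2 * (1 - α ^ 2) := by rw [mul_pow, hβ2]
        rw [this, htdef, hudef]
        field_simp
        ring

lemma stdGaussian_Icc_ge (a : ℝ) (ha : 0 ≤ a) :
    ENNReal.ofReal (Real.exp (-(a + 1) ^ 2 / 2) / Real.sqrt (2 * Real.pi))
      ≤ stdGaussian (Set.Icc a (a + 1)) := by
  unfold stdGaussian
  rw [withDensity_apply _ measurableSet_Icc]
  have h1 : ∫⁻ _ in Set.Icc a (a + 1),
      ENNReal.ofReal (Real.exp (-(a + 1) ^ 2 / 2) / Real.sqrt (2 * Real.pi)) ∂volume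
      = ENNReal.ofReal (Real.exp (-(a + 1) ^ 2 / 2) / Real.sqrt (2 * Real.pi)) := by
    rw [setLIntegral_const, Real.volume_Icc]
    norm_num
  rw [← h1]
  refine setLIntegral_mono (by fun_prop) fun x hx => ?_
  apply ENNReal.ofReal_le_ofReal
  obtain ⟨hx1, hx2⟩ := hx
  have h2π : (0:ℝ) < Real.sqrt (2 * Real.pi) := Real.sqrt_pos.2 (by positivity)
  gcongr
  nlinarith

lemma lower_bound (α lam : ℝ) (hα₁ : -1 < α) (hα₂ : α < 1)
    (hlam : 0 < lam) (hlamα : α < lam) (η : ℝ) (hη : 0 ≤ η) :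
    Real.exp (-(η + 1) ^ 2 / 2) / Real.sqrt (2 * Real.pi) *
        (Real.exp (-(((lam - α) * η + 1) / Real.sqrt (1 - α ^ 2) + 1) ^ 2 / 2) /
          Real.sqrt (2 * Real.pi))
      ≤ ((stdGaussian.prod stdGaussian)
          {p : ℝ × ℝ | η ≤ p.1 ∧ lam * η ≤ α * p.1 + Real.sqrt (1 - α ^ 2) * p.2}).toReal := by
  set β := Real.sqrt (1 - α ^ 2) with hβdef
  have hB : (0:ℝ) < 1 - α ^ 2 := by nlinarith
  have hβpos : 0 < β := Real.sqrt_pos.2 hB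
  set c := ((lam - α) * η + 1) / β with hcdef
  have hc : 0 ≤ c := div_nonneg (by nlinarith) hβpos.le
  have hβc : β * c = (lam - α) * η + 1 := mul_div_cancel₀ _ hβpos.ne'
  have hsub : Set.Icc η (η + 1) ×ˢ Set.Icc c (c + 1)
      ⊆ {p : ℝ × ℝ | η ≤ p.1 ∧ lam * η ≤ α * p.1 + β * p.2} := by
    rintro ⟨x, y⟩ ⟨⟨hx1, hx2⟩, ⟨hy1, _⟩⟩
    refine ⟨hx1, ?_⟩
    have hby : (lam - α) * η + 1 ≤ β * y := by
      rw [← hβc]; exact mul_le_mul_of_nonneg_left hy1 hβpos.le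
    rcases le_or_gt 0 α with h | h
    · nlinarith
    · nlinarith
  have hmeas : (stdGaussian.prod stdGaussian) (Set.Icc η (η + 1) ×ˢ Set.Icc c (c + 1))
      ≤ (stdGaussian.prod stdGaussian) {p : ℝ × ℝ | η ≤ p.1 ∧ lam * η ≤ α * p.1 + β * p.2} :=
    measure_mono hsub
  rw [Measure.prod_prod] at hmeas
  have hlow : ENNReal.ofReal (Real.exp (-(η + 1) ^ 2 / 2) / Real.sqrt (2 * Real.pi)) *
      ENNReal.ofReal (Real.exp (-(c + 1) ^ 2 / 2) / Real.sqrt (2 * Real.pi))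
      ≤ stdGaussian (Set.Icc η (η + 1)) * stdGaussian (Set.Icc c (c + 1)) :=
    mul_le_mul' (stdGaussian_Icc_ge η hη) (stdGaussian_Icc_ge c hc)
  have := hlow.trans hmeas
  rw [← ENNReal.ofReal_mul (by positivity)] at this
  calc Real.exp (-(η + 1) ^ 2 / 2) / Real.sqrt (2 * Real.pi) *
        (Real.exp (-(c + 1) ^ 2 / 2) / Real.sqrt (2 * Real.pi))
      = (ENNReal.ofReal (Real.exp (-(η + 1) ^ 2 / 2) / Real.sqrt (2 * Real.pi) *
          (Real.exp (-(c + 1) ^ 2 / 2) / Real.sqrt (2 * Real.pi)))).toReal := by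
        rw [ENNReal.toReal_ofReal (by positivity)]
    _ ≤ _ := ENNReal.toReal_mono (measure_ne_top _ _) this

/-- For independent standard normals `X, Y`, `α ∈ (−1,1)`, `β = √(1−α²)`, and
`G(η, σ) := ℙ(X ≥ η and αX + βY ≥ σ)`, if `λ > 0`, `λ > α`, and `λα < 1`, then along `σ = λη`
one has `G(η, λη) = exp(−(1+o(1))·(η² + (λη)² − 2·η·(λη)·α)/(2β²))` as `η → ∞`; that is,
`(−2β²·log G(η, λη)) / ((1 + λ² − 2λα)·η²) → 1`. -/
theorem gaussian_pair_tail_asymptotics (α lam : ℝ) (hα₁ : -1 < α) (hα₂ : α < 1)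
    (hlam : 0 < lam) (hlamα : α < lam) (hlamα' : lam * α < 1) :
    Filter.Tendsto
      (fun η : ℝ =>
        (-2 * Real.sqrt (1 - α ^ 2) ^ 2 *
          Real.log (((stdGaussian.prod stdGaussian)
            {p : ℝ × ℝ | η ≤ p.1 ∧ lam * η ≤ α * p.1 + Real.sqrt (1 - α ^ 2) * p.2}).toReal))
          / ((1 + lam ^ 2 - 2 * lam * α) * η ^ 2))
      Filter.atTop (nhds 1) := by
  have hB : (0:ℝ) < 1 - α ^ 2 := by nlinarith
  have hβ2 : Real.sqrt (1 - α ^ 2) ^ 2 = 1 - α ^ 2 := Real.sq_sqrt hB.le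
  have hβpos : (0:ℝ) < Real.sqrt (1 - α ^ 2) := Real.sqrt_pos.2 hB
  set β := Real.sqrt (1 - α ^ 2) with hβdef
  set B := 1 - α ^ 2 with hBdef
  set D := 1 + lam ^ 2 - 2 * lam * α with hDdef
  have hD : 0 < D := by nlinarith
  set G : ℝ → ℝ := fun η => ((stdGaussian.prod stdGaussian)
      {p : ℝ × ℝ | η ≤ p.1 ∧ lam * η ≤ α * p.1 + β * p.2}).toReal with hGdef
  set U : ℝ → ℝ := fun η =>
      (B * (η + 1) ^ 2 + ((lam - α) * η + 1 + β) ^ 2 + 2 * B * Real.log (2 * π)) / (D * η ^ 2)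
    with hUdef
  -- key inequalities for η ≥ 1
  have key : ∀ η : ℝ, 1 ≤ η →
      1 ≤ -2 * β ^ 2 * Real.log (G η) / (D * η ^ 2) ∧
      -2 * β ^ 2 * Real.log (G η) / (D * η ^ 2) ≤ U η := by
    intro η hη
    have hη0 : (0:ℝ) ≤ η := by linarith
    have hηpos : (0:ℝ) < η := by linarith
    have hDη : (0:ℝ) < D * η ^ 2 := by positivity
    set c := ((lam - α) * η + 1) / β with hcdef
    have hβc : β * c = (lam - α) * η + 1 := mul_div_cancel₀ _ hβpos.ne'
    have hlow : Real.exp (-(η + 1) ^ 2 / 2) / Real.sqrt (2 * Real.pi) *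
        (Real.exp (-(c + 1) ^ 2 / 2) / Real.sqrt (2 * Real.pi)) ≤ G η :=
      lower_bound α lam hα₁ hα₂ hlam hlamα η hη0
    have hup : G η ≤ Real.exp (-(D * η ^ 2) / (2 * B)) :=
      upper_bound α lam hα₁ hα₂ hlam hlamα hlamα' η hη0
    have hLpos : 0 < Real.exp (-(η + 1) ^ 2 / 2) / Real.sqrt (2 * Real.pi) *
        (Real.exp (-(c + 1) ^ 2 / 2) / Real.sqrt (2 * Real.pi)) := by positivity
    have hGpos : 0 < G η := lt_of_lt_of_le hLpos hlow
    -- upper: log G ≤ -(D η²)/(2B)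
    have hlog_up : Real.log (G η) ≤ -(D * η ^ 2) / (2 * B) := by
      calc Real.log (G η) ≤ Real.log (Real.exp (-(D * η ^ 2) / (2 * B))) :=
            Real.log_le_log hGpos hup
        _ = -(D * η ^ 2) / (2 * B) := Real.log_exp _
    -- lower: log G ≥ -(η+1)²/2 - (c+1)²/2 - log (2π)
    have hLeq : Real.exp (-(η + 1) ^ 2 / 2) / Real.sqrt (2 * Real.pi) *
        (Real.exp (-(c + 1) ^ 2 / 2) / Real.sqrt (2 * Real.pi))
        = Real.exp (-(η + 1) ^ 2 / 2 + -(c + 1) ^ 2 / 2) / (2 * π) := by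
      rw [div_mul_div_comm, ← Real.exp_add,
        Real.mul_self_sqrt (by positivity : (0:ℝ) ≤ 2 * π)]
    have hlog_low : -(η + 1) ^ 2 / 2 + -(c + 1) ^ 2 / 2 - Real.log (2 * π) ≤ Real.log (G η) := by
      have := Real.log_le_log hLpos hlow
      rw [hLeq, Real.log_div (Real.exp_ne_zero _) (by positivity), Real.log_exp] at this
      linarith
    constructor
    · rw [le_div_iff₀ hDη]
      have h2B : (0:ℝ) < 2 * B := by positivity
      have h1 : Real.log (G η) * (2 * B) ≤ (-(D * η ^ 2) / (2 * B)) * (2 * B) :=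
        mul_le_mul_of_nonneg_right hlog_up h2B.le
      rw [div_mul_cancel₀ _ h2B.ne'] at h1
      rw [hβ2]
      nlinarith
    · rw [hUdef]
      have hBc : B * (c + 1) ^ 2 = ((lam - α) * η + 1 + β) ^ 2 := by
        have : B * (c + 1) ^ 2 = (β * (c + 1)) ^ 2 := by rw [mul_pow, hβ2]
        rw [this, mul_add, hβc, mul_one]
      have hnum : -2 * β ^ 2 * Real.log (G η)
          ≤ B * (η + 1) ^ 2 + ((lam - α) * η + 1 + β) ^ 2 + 2 * B * Real.log (2 * π) := by
        rw [hβ2]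
        nlinarith [hlog_low]
      exact (div_le_div_iff_of_pos_right hDη).mpr hnum
  -- limit of U
  have hU : Filter.Tendsto U Filter.atTop (nhds 1) := by
    have hF : Filter.Tendsto (fun x : ℝ =>
        (B * (1 + x) ^ 2 + ((lam - α) + (1 + β) * x) ^ 2 + 2 * B * Real.log (2 * π) * x ^ 2) / D)
        (nhds 0) (nhds 1) := by
      have hcont : Continuous (fun x : ℝ =>
          (B * (1 + x) ^ 2 + ((lam - α) + (1 + β) * x) ^ 2 + 2 * B * Real.log (2 * π) * x ^ 2) / D) := by
        fun_prop
      have h0' : (B + (lam - α) ^ 2) / D = 1 := by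
        rw [div_eq_one_iff_eq hD.ne', hBdef, hDdef]; ring
      simpa [h0'] using hcont.tendsto 0
    have hcomp := hF.comp tendsto_inv_atTop_zero
    apply hcomp.congr'
    filter_upwards [Filter.eventually_ge_atTop (1:ℝ)] with η hη
    have hηpos : (0:ℝ) < η := by linarith
    rw [hUdef]
    show (B * (1 + η⁻¹) ^ 2 + ((lam - α) + (1 + β) * η⁻¹) ^ 2
        + 2 * B * Real.log (2 * π) * (η⁻¹) ^ 2) / D = _
    dsimp only
    rw [div_eq_div_iff (by positivity) (by positivity)]
    field_simp
    ring
  -- squeeze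
  have hgoal : Filter.Tendsto
      (fun η : ℝ => -2 * β ^ 2 * Real.log (G η) / (D * η ^ 2)) Filter.atTop (nhds 1) := by
    apply tendsto_of_tendsto_of_tendsto_of_le_of_le' tendsto_const_nhds hU
    · filter_upwards [Filter.eventually_ge_atTop (1:ℝ)] with η hη
      exact (key η hη).1
    · filter_upwards [Filter.eventually_ge_atTop (1:ℝ)] with η hη
      exact (key η hη).2
  exact hgoal
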